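/- Let 𝔸_f = FiniteAdeleRing ℤ ℚ be the finite adele ring of ℚ (the restricted product of the completions of ℚ at the height-one primes of ℤ with respect to their valuation rings). For every unit x of 𝔸_f and every height-one prime v₀ of ℤ, there exists q ∈ ℚˣ such that for every height-one prime v ≠ v₀ of ℤ, the v-component of x · (the image of q)⁻¹ is a unit of the v-adic valuation ring, i.e. has valuation exactly 1. -/

import Mathlib

open IsDedekindDomain

/-- (Strong approximation for the finite ideles of `ℚ`.) For every unit `x`
of the finite adele ring of `ℚ` and every height-one prime `v₀` of `ℤ`, there is a global
`q ∈ ℚˣ` such that `x · q⁻¹` has component a unit of the `v`-adic integers (valuation exactly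
`1`) at every height-one prime `v ≠ v₀`. -/
theorem finite_idele_strong_approximation
    (x : (FiniteAdeleRing ℤ ℚ)ˣ) (v₀ : HeightOneSpectrum ℤ) :
    ∃ q : ℚˣ, ∀ v : HeightOneSpectrum ℤ, v ≠ v₀ →
      Valued.v (((x * (Units.map (algebraMap ℚ (FiniteAdeleRing ℤ ℚ)).toMonoidHom q)⁻¹ :
        (FiniteAdeleRing ℤ ℚ)ˣ) : FiniteAdeleRing ℤ ℚ) v) = 1 := by
  classical
  set a : FiniteAdeleRing ℤ ℚ := (x : FiniteAdeleRing ℤ ℚ) with ha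
  set b : FiniteAdeleRing ℤ ℚ := ((x⁻¹ : (FiniteAdeleRing ℤ ℚ)ˣ) : FiniteAdeleRing ℤ ℚ) with hb
  -- components multiply to 1
  have hmul : ∀ v : HeightOneSpectrum ℤ, (a v) * (b v) = 1 := by
    intro v
    have : a * b = 1 := by rw [ha, hb, ← Units.val_mul, mul_inv_cancel, Units.val_one]
    exact congrFun (congrArg Subtype.val this) v
  have hval : ∀ v : HeightOneSpectrum ℤ, Valued.v (a v) * Valued.v (b v) = 1 := by
    intro v
    rw [← Valuation.map_mul, hmul v, Valuation.map_one]
  have hne : ∀ v : HeightOneSpectrum ℤ, Valued.v (a v) ≠ 0 := by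
    intro v h
    have := hval v
    rw [h, zero_mul] at this
    exact zero_ne_one this
  -- the bad set is finite
  have hS : {v : HeightOneSpectrum ℤ | Valued.v (a v) ≠ 1}.Finite := by
    have fa : {v | a v ∉ HeightOneSpectrum.adicCompletionIntegers ℚ v}.Finite :=
      Filter.eventually_cofinite.mp a.2
    have fb : {v | b v ∉ HeightOneSpectrum.adicCompletionIntegers ℚ v}.Finite :=
      Filter.eventually_cofinite.mp b.2
    apply Set.Finite.subset (fa.union fb)
    intro v hv
    by_contra hcon
    simp only [Set.mem_union, Set.mem_setOf_eq, not_or, not_not] at hcon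
    obtain ⟨h1, h2⟩ := hcon
    rw [HeightOneSpectrum.mem_adicCompletionIntegers] at h1 h2
    apply hv
    have h3 : Valued.v (b v) = (Valued.v (a v))⁻¹ := by
      have h0 := hne v
      exact eq_inv_of_mul_eq_one_left (by rw [mul_comm]; exact hval v)
    rw [h3, inv_le_one₀ (lt_of_le_of_ne (zero_le') (Ne.symm (hne v)))] at h2
    exact le_antisymm h1 h2
  -- choose exponents
  have hm' : ∀ v : HeightOneSpectrum ℤ, ∃ m : Multiplicative ℤ, (m : WithZero (Multiplicative ℤ)) = Valued.v (a v) :=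
    fun v => WithZero.ne_zero_iff_exists.mp (hne v)
  choose m hm using hm'
  -- choose generators
  have hgen : ∀ v : HeightOneSpectrum ℤ, ∃ r : ℤ, r ≠ 0 ∧ v.asIdeal = Ideal.span {r} := by
    intro v
    obtain ⟨r, hr⟩ := (IsPrincipalIdealRing.principal v.asIdeal)
    refine ⟨r, ?_, hr⟩
    rintro rfl
    exact v.ne_bot (hr.trans (Ideal.span_singleton_eq_bot.mpr rfl))
  choose π hπ0 hπspan using hgen
  -- valuations of generators
  have hππ : ∀ v : HeightOneSpectrum ℤ, v.valuation ℚ ((π v : ℚ)) =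
      (Multiplicative.ofAdd (-1 : ℤ) : Multiplicative ℤ) := by
    intro v
    have : ((π v : ℚ)) = algebraMap ℤ ℚ (π v) := by simp
    rw [this, HeightOneSpectrum.valuation_of_algebraMap,
      HeightOneSpectrum.intValuation_singleton v (hπ0 v) (hπspan v)]
    rfl
  have hππ' : ∀ v w : HeightOneSpectrum ℤ, v ≠ w → v.valuation ℚ ((π w : ℚ)) = 1 := by
    intro v w hvw
    have hcast : ((π w : ℚ)) = algebraMap ℤ ℚ (π w) := by simp
    rw [hcast, HeightOneSpectrum.valuation_of_algebraMap]
    refine le_antisymm (HeightOneSpectrum.intValuation_le_one v (π w)) ?_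
    by_contra hlt
    rw [not_le] at hlt
    rw [HeightOneSpectrum.intValuation_lt_one_iff_dvd, ← hπspan w, Ideal.dvd_iff_le] at hlt
    exact hvw (HeightOneSpectrum.ext ((w.isMaximal.eq_of_le v.isMaximal.ne_top hlt).symm))
  -- the global element
  let u : HeightOneSpectrum ℤ → ℚˣ := fun v => Units.mk0 ((π v : ℚ)) (by exact_mod_cast hπ0 v)
  let q : ℚˣ := ∏ v ∈ hS.toFinset, (u v) ^ (-(Multiplicative.toAdd (m v)))
  -- value of q at each place
  have hq : ∀ v : HeightOneSpectrum ℤ, v.valuation ℚ ((q : ℚ)) = Valued.v (a v) := by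
    intro v
    have hcoe : ((q : ℚ)) = ∏ w ∈ hS.toFinset, ((π w : ℚ)) ^ (-(Multiplicative.toAdd (m w))) := by
      simp [q, u]
    rw [hcoe, map_prod]
    have hterm : ∀ w ∈ hS.toFinset,
        v.valuation ℚ (((π w : ℚ)) ^ (-(Multiplicative.toAdd (m w)))) =
          if w = v then (m v : WithZero (Multiplicative ℤ)) else 1 := by
      intro w hw
      rw [map_zpow₀]
      rcases eq_or_ne w v with rfl | hwv
      · rw [hππ w, if_pos rfl, ← WithZero.coe_zpow, ← ofAdd_zsmul]
        norm_num
      · rw [hππ' v w (Ne.symm hwv), if_neg hwv, one_zpow]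
    rw [Finset.prod_congr rfl hterm]
    by_cases hv : v ∈ hS.toFinset
    · rw [Finset.prod_ite_eq' hS.toFinset v (fun _ => (m v : WithZero (Multiplicative ℤ))), if_pos hv, hm v]
    · rw [Finset.prod_ite_eq' hS.toFinset v (fun _ => (m v : WithZero (Multiplicative ℤ))), if_neg hv]
      have : Valued.v (a v) = 1 := by
        by_contra h
        exact hv (hS.mem_toFinset.mpr h)
      rw [this]
  refine ⟨q, fun v _ => ?_⟩
  have hinv : ((Units.map (algebraMap ℚ (FiniteAdeleRing ℤ ℚ)).toMonoidHom q)⁻¹ :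
      (FiniteAdeleRing ℤ ℚ)ˣ) = Units.map (algebraMap ℚ (FiniteAdeleRing ℤ ℚ)).toMonoidHom q⁻¹ :=
    (map_inv _ q).symm
  rw [Units.val_mul, hinv]
  have h2 : ((Units.map (algebraMap ℚ (FiniteAdeleRing ℤ ℚ)).toMonoidHom q⁻¹ :
      (FiniteAdeleRing ℤ ℚ)ˣ) : FiniteAdeleRing ℤ ℚ) =
      algebraMap ℚ (FiniteAdeleRing ℤ ℚ) ((q : ℚ)⁻¹) := by
    rw [Units.coe_map]
    simp
  have h1 : ∀ c : FiniteAdeleRing ℤ ℚ, ((x : FiniteAdeleRing ℤ ℚ) * c) v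
      = (x : FiniteAdeleRing ℤ ℚ) v * c v := fun c => rfl
  rw [h1, h2]
  have h3 : ∀ k : ℚ, Valued.v ((algebraMap ℚ (FiniteAdeleRing ℤ ℚ) k) v) = v.valuation ℚ k := by
    intro k
    have e1 : (algebraMap ℚ (FiniteAdeleRing ℤ ℚ) k) v
        = algebraMap ℚ (v.adicCompletion ℚ) k := rfl
    rw [e1, HeightOneSpectrum.algebraMap_adicCompletion]
    exact HeightOneSpectrum.valuedAdicCompletion_eq_valuation' v k
  rw [Valuation.map_mul, h3, map_inv₀, hq v]
  exact mul_inv_cancel₀ (hne v)
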